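/- Assume 0 ≤ λ < 1 and that there exists T ∈ ℕ with c_τ = 0 and u_τ = 0 for all τ > T. Then the λ-weighted synthetic gradient G_t^λ := (1−λ) Σ_{n=1}^{∞} λ^{n−1} G_t^{(n)} (a convergent series, since G_t^{(n)} is eventually constant in n) satisfies the recursive identity G_t^λ = c_{t+1} P(t+1,t) + γλ G_{t+1}^λ P(t+1,t) + γ(1−λ) u_{t+1} P(t+1,t) for every t. -/

import Mathlib

open Finset Matrix

noncomputable section

/-- Propagator `Pfrom J a n = P(a+n, a) = J_{a+n-1} ⋯ J_a`. -/
def Pfrom {d : ℕ} (J : ℕ → Matrix (Fin d) (Fin d) ℝ) (a : ℕ) : ℕ → Matrix (Fin d) (Fin d) ℝ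
  | 0 => 1
  | n + 1 => J (a + n) * Pfrom J a n

/-- Propagator `P J b a = P(b, a) = J_{b-1} ⋯ J_a` (for `b ≥ a`). -/
def P {d : ℕ} (J : ℕ → Matrix (Fin d) (Fin d) ℝ) (b a : ℕ) : Matrix (Fin d) (Fin d) ℝ :=
  Pfrom J a (b - a)

/-- The n-step synthetic gradient `G_a^{(n)}`. -/
def Gn {d : ℕ} (γ : ℝ) (J : ℕ → Matrix (Fin d) (Fin d) ℝ) (c u : ℕ → Fin d → ℝ)
    (a n : ℕ) : Fin d → ℝ :=
  (∑ k ∈ Finset.range n, γ ^ k • Matrix.vecMul (c (a + k + 1)) (P J (a + k + 1) a))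
    + γ ^ n • Matrix.vecMul (u (a + n)) (P J (a + n) a)

/-- The interim λ-weighted synthetic gradient `G_a^{λ|H}`. -/
def GLam {d : ℕ} (γ lam : ℝ) (J : ℕ → Matrix (Fin d) (Fin d) ℝ) (c u : ℕ → Fin d → ℝ)
    (a H : ℕ) : Fin d → ℝ :=
  (1 - lam) • (∑ n ∈ Finset.range (H - a - 1), lam ^ n • Gn γ J c u a (n + 1))
    + lam ^ (H - a - 1) • Gn γ J c u a (H - a)

/-- The modified temporal-difference error `δ'_{a,t}`. -/
def δ' {d : ℕ} (γ : ℝ) (J : ℕ → Matrix (Fin d) (Fin d) ℝ) (c u : ℕ → Fin d → ℝ)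
    (a t : ℕ) : Fin d → ℝ :=
  Matrix.vecMul (c (t + 1) + γ • u (t + 1)) (P J (t + 1) a) - Matrix.vecMul (u t) (P J t a)

/-- The temporal-difference error `δ_t`. -/
def δtd {d : ℕ} (γ : ℝ) (J : ℕ → Matrix (Fin d) (Fin d) ℝ) (c u w : ℕ → Fin d → ℝ)
    (t : ℕ) : Fin d → ℝ :=
  Matrix.vecMul (c (t + 1) + γ • u (t + 1)) (P J (t + 1) t) - w t

/-- `δ_{a,t} = δ_t P(t,a)`. -/
def δab {d : ℕ} (γ : ℝ) (J : ℕ → Matrix (Fin d) (Fin d) ℝ) (c u w : ℕ → Fin d → ℝ)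
    (a t : ℕ) : Fin d → ℝ :=
  Matrix.vecMul (δtd γ J c u w t) (P J t a)

lemma sum_vecMul' {d : ℕ} {ι : Type*} (s : Finset ι) (f : ι → Fin d → ℝ)
    (M : Matrix (Fin d) (Fin d) ℝ) :
    Matrix.vecMul (∑ i ∈ s, f i) M = ∑ i ∈ s, Matrix.vecMul (f i) M := by
  ext j
  simp only [Matrix.vecMul, dotProduct, Finset.sum_apply, Finset.sum_mul]
  rw [Finset.sum_comm]

lemma Pfrom_succ_right {d : ℕ} (J : ℕ → Matrix (Fin d) (Fin d) ℝ) (a : ℕ) (n : ℕ) :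
    Pfrom J a (n + 1) = Pfrom J (a + 1) n * J a := by
  induction n with
  | zero => simp [Pfrom]
  | succ n ih =>
    show J (a + (n+1)) * Pfrom J a (n+1) = Pfrom J (a+1) (n+1) * J a
    rw [ih]
    show J (a + (n+1)) * (Pfrom J (a+1) n * J a) = (J (a + 1 + n) * Pfrom J (a+1) n) * J a
    have : a + (n+1) = a + 1 + n := by omega
    rw [this, Matrix.mul_assoc]

lemma P_succ {d : ℕ} (J : ℕ → Matrix (Fin d) (Fin d) ℝ) (a b : ℕ) (h : a + 1 ≤ b) :
    P J b a = P J b (a + 1) * J a := by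
  obtain ⟨n, rfl⟩ : ∃ n, b = a + 1 + n := ⟨b - (a+1), by omega⟩
  have h1 : a + 1 + n - a = n + 1 := by omega
  have h2 : a + 1 + n - (a + 1) = n := by omega
  rw [P, P, h1, h2, Pfrom_succ_right]

lemma Gn_rec {d : ℕ} (γ : ℝ) (J : ℕ → Matrix (Fin d) (Fin d) ℝ) (c u : ℕ → Fin d → ℝ)
    (a n : ℕ) :
    Gn γ J c u a (n + 1)
      = Matrix.vecMul (c (a + 1)) (P J (a + 1) a)
        + γ • Matrix.vecMul (Gn γ J c u (a + 1) n) (P J (a + 1) a) := by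
  have hP : P J (a + 1) a = J a := by simp [P, Pfrom]
  have hPP : ∀ k, P J (a + 1 + k) (a + 1) * J a = P J (a + 1 + k) a := fun k =>
    (P_succ J a (a + 1 + k) (by omega)).symm
  unfold Gn
  rw [Finset.sum_range_succ']
  rw [hP, Matrix.add_vecMul, Matrix.smul_vecMul, sum_vecMul']
  simp only [Matrix.smul_vecMul, Matrix.vecMul_vecMul, smul_add, Finset.smul_sum, smul_smul]
  have key : ∀ k : ℕ, (γ * γ ^ k) • Matrix.vecMul (c (a+1+k+1)) (P J (a+1+k+1) (a+1) * J a)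
      = γ ^ (k+1) • Matrix.vecMul (c (a+(k+1)+1)) (P J (a+(k+1)+1) a) := by
    intro k
    have e : a + 1 + k + 1 = a + 1 + (k + 1) := by omega
    have e' : a + (k + 1) + 1 = a + 1 + (k + 1) := by omega
    rw [e, e', hPP (k+1), ← pow_succ']
  have keyu : (γ * γ ^ n) • Matrix.vecMul (u (a+1+n)) (P J (a+1+n) (a+1) * J a)
      = γ ^ (n+1) • Matrix.vecMul (u (a+(n+1))) (P J (a+(n+1)) a) := by
    have e : a + 1 + n = a + (n + 1) := by omega
    rw [hPP n, e, ← pow_succ']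
  rw [Finset.sum_congr rfl (fun k _ => key k), keyu]
  simp only [pow_zero, one_smul]
  have : a + 0 + 1 = a + 1 := by omega
  rw [this]
  abel



lemma Gn_eventually_const {d : ℕ} (γ : ℝ) (J : ℕ → Matrix (Fin d) (Fin d) ℝ) (c u : ℕ → Fin d → ℝ)
    (T : ℕ) (hc : ∀ τ, T < τ → c τ = 0) (hu : ∀ τ, T < τ → u τ = 0)
    (a : ℕ) {n : ℕ} (hn : T + 1 ≤ n) :
    Gn γ J c u a n = Gn γ J c u a (T + 1) := by
  induction n, hn using Nat.le_induction with
  | base => rfl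
  | succ n hn ih =>
    rw [← ih]
    unfold Gn
    rw [Finset.sum_range_succ]
    rw [hc (a + n + 1) (by omega), hu (a + n) (by omega), hu (a + (n+1)) (by omega)]
    simp

lemma summable_lam_Gn {d : ℕ} (γ lam : ℝ) (hlam0 : 0 ≤ lam) (hlam1 : lam < 1)
    (J : ℕ → Matrix (Fin d) (Fin d) ℝ) (c u : ℕ → Fin d → ℝ)
    (T : ℕ) (hc : ∀ τ, T < τ → c τ = 0) (hu : ∀ τ, T < τ → u τ = 0)
    (a m : ℕ) :
    Summable (fun n : ℕ => lam ^ n • Gn γ J c u a (n + m)) := by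
  have hgeo : Summable (fun n : ℕ => lam ^ n) :=
    summable_geometric_of_lt_one hlam0 hlam1
  set L := Gn γ J c u a (T + 1) with hL
  have h1 : Summable (fun n : ℕ => lam ^ n • L) := hgeo.smul_const L
  have h2 : Summable (fun n : ℕ =>
      lam ^ n • Gn γ J c u a (n + m) - lam ^ n • L) := by
    apply summable_of_ne_finset_zero (s := Finset.range (T + 1))
    intro n hn
    simp only [Finset.mem_range, not_lt] at hn
    rw [Gn_eventually_const γ J c u T hc hu a (by omega : T + 1 ≤ n + m), sub_self]
  simpa using h2.add h1

/-- assuming `0 ≤ λ < 1` and that `c_τ = 0` and `u_τ = 0` for all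
`τ > T`, the λ-weighted synthetic gradient `G_t^λ := (1−λ) Σ_{n=1}^∞ λ^{n−1} G_t^{(n)}`
is given by a convergent series and satisfies the recursive identity
`G_t^λ = c_{t+1} P(t+1,t) + γλ G_{t+1}^λ P(t+1,t) + γ(1−λ) u_{t+1} P(t+1,t)`. -/
theorem lambda_SG_recursive {d : ℕ} (γ lam : ℝ) (hlam0 : 0 ≤ lam) (hlam1 : lam < 1)
    (J : ℕ → Matrix (Fin d) (Fin d) ℝ) (c u : ℕ → Fin d → ℝ)
    (T : ℕ) (hc : ∀ τ, T < τ → c τ = 0) (hu : ∀ τ, T < τ → u τ = 0) (t : ℕ) :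
    Summable (fun n : ℕ => lam ^ n • Gn γ J c u t (n + 1)) ∧
    (1 - lam) • ∑' n : ℕ, lam ^ n • Gn γ J c u t (n + 1)
      = Matrix.vecMul (c (t + 1)) (P J (t + 1) t)
        + (γ * lam) •
            Matrix.vecMul ((1 - lam) • ∑' n : ℕ, lam ^ n • Gn γ J c u (t + 1) (n + 1))
              (P J (t + 1) t)
        + (γ * (1 - lam)) • Matrix.vecMul (u (t + 1)) (P J (t + 1) t) := by
  have hgeo : Summable (fun n : ℕ => lam ^ n) := summable_geometric_of_lt_one hlam0 hlam1
  have hS1 : Summable (fun n : ℕ => lam ^ n • Gn γ J c u t (n + 1)) := by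
    simpa using summable_lam_Gn γ lam hlam0 hlam1 J c u T hc hu t 1
  refine ⟨hS1, ?_⟩
  set Pm := P J (t + 1) t with hPm
  set L : (Fin d → ℝ) →L[ℝ] (Fin d → ℝ) :=
    LinearMap.toContinuousLinearMap (Matrix.vecMulLinear Pm) with hLdef
  have hL : ∀ v : Fin d → ℝ, L v = Matrix.vecMul v Pm := by
    intro v
    simp [hLdef, Matrix.vecMulLinear_apply]
  set S' : Fin d → ℝ := ∑' n : ℕ, lam ^ n • Gn γ J c u (t + 1) (n + 1) with hS'def
  have hS1' : Summable (fun n : ℕ => lam ^ n • Gn γ J c u (t + 1) (n + 1)) := by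
    simpa using summable_lam_Gn γ lam hlam0 hlam1 J c u T hc hu (t + 1) 1
  have hg : Summable (fun n : ℕ => lam ^ n • Gn γ J c u (t + 1) n) := by
    simpa using summable_lam_Gn γ lam hlam0 hlam1 J c u T hc hu (t + 1) 0
  -- value of the shifted series
  have hGn0 : Gn γ J c u (t + 1) 0 = u (t + 1) := by
    simp [Gn, P, Pfrom]
  have hgsum : (∑' n : ℕ, lam ^ n • Gn γ J c u (t + 1) n) = u (t + 1) + lam • S' := by
    rw [Summable.tsum_eq_zero_add hg]
    congr 1
    · simp [hGn0]
    · rw [hS'def, ← Summable.tsum_const_smul lam hS1']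
      congr 1
      ext n
      rw [smul_smul, ← pow_succ']
  -- summabilities for splitting
  have hA : Summable (fun n : ℕ => lam ^ n • Matrix.vecMul (c (t + 1)) Pm) :=
    hgeo.smul_const _
  have hB0 : Summable (fun n : ℕ => L (lam ^ n • Gn γ J c u (t + 1) n)) :=
    hg.map L L.continuous
  have hB : Summable (fun n : ℕ => γ • L (lam ^ n • Gn γ J c u (t + 1) n)) :=
    hB0.const_smul γ
  -- main series computation
  have hmain : (∑' n : ℕ, lam ^ n • Gn γ J c u t (n + 1))
      = (1 - lam)⁻¹ • Matrix.vecMul (c (t + 1)) Pm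
        + γ • L (u (t + 1) + lam • S') := by
    have hterm : ∀ n : ℕ, lam ^ n • Gn γ J c u t (n + 1)
        = lam ^ n • Matrix.vecMul (c (t + 1)) Pm
          + γ • L (lam ^ n • Gn γ J c u (t + 1) n) := by
      intro n
      rw [Gn_rec, L.map_smul, hL, smul_add, smul_comm (lam ^ n) γ]
    calc (∑' n : ℕ, lam ^ n • Gn γ J c u t (n + 1))
        = ∑' n : ℕ, (lam ^ n • Matrix.vecMul (c (t + 1)) Pm
            + γ • L (lam ^ n • Gn γ J c u (t + 1) n)) := by
          exact tsum_congr hterm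
      _ = (∑' n : ℕ, lam ^ n • Matrix.vecMul (c (t + 1)) Pm)
            + ∑' n : ℕ, γ • L (lam ^ n • Gn γ J c u (t + 1) n) := Summable.tsum_add hA hB
      _ = (1 - lam)⁻¹ • Matrix.vecMul (c (t + 1)) Pm + γ • L (u (t + 1) + lam • S') := by
          congr 1
          · rw [Summable.tsum_smul_const hgeo, tsum_geometric_of_lt_one hlam0 hlam1]
          · rw [Summable.tsum_const_smul γ hB0, ← L.map_tsum hg, hgsum]
  rw [hmain]
  have hne : (1 : ℝ) - lam ≠ 0 := by linarith
  rw [map_add, L.map_smul, hL, hL, Matrix.smul_vecMul]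
  ext i
  simp only [Pi.smul_apply, Pi.add_apply, smul_eq_mul]
  field_simp
  ring
end
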